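/- arXiv:2506.13911 — 2 statements merged into one kernel-verified Lean document; each statement's English description precedes it below -/
import Mathlib

section
/- For every graded modal logic formula φ there is a GNN A such that cls_A = cls_φ, i.e., for every pointed graph (G,v), cls_A(G,v) = 1 if G,v ⊨ φ and cls_A(G,v) = 0 otherwise. Moreover, the GNN in question uses only pointwise Sum as aggregation functions and ReLU feed-forward neural networks as combination functions. -/
open Classical

/-! ### Graphs with `p` binary node features -/

/-- A finite undirected graph with node labels over `p` binary features. -/
structure LGraph (p : ℕ) : Type 1 where
  V : Type
  fintypeV : Fintype V
  decEqV : DecidableEq V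
  adj : V → V → Prop
  symm : ∀ {u v}, adj u v → adj v u
  irrefl : ∀ v, ¬ adj v v
  lab : V → Fin p → Prop

attribute [instance] LGraph.fintypeV LGraph.decEqV

namespace LGraph

variable {p : ℕ}

/-- The finset of neighbours of a node. -/
noncomputable def nbrFinset (G : LGraph p) (v : G.V) : Finset G.V :=
  Finset.univ.filter (fun u => G.adj v u)

/-- Multi-hot label encoding. -/
noncomputable def embG (G : LGraph p) (v : G.V) : Fin p → ℝ :=
  fun i => if G.lab v i then 1 else 0

/-- `G.within v r u` : node `u` is at distance at most `r` from `v`. -/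
def within (G : LGraph p) (v : G.V) : ℕ → G.V → Prop
  | 0 => fun u => u = v
  | (r+1) => fun u => G.within v r u ∨ ∃ w, G.within v r w ∧ G.adj w u

theorem within_self (G : LGraph p) (v : G.V) : ∀ r, G.within v r v
  | 0 => rfl
  | (r+1) => Or.inl (G.within_self v r)

/-- Induced subgraph on a set of nodes. -/
noncomputable def induce (G : LGraph p) (S : Set G.V) : LGraph p where
  V := {u // u ∈ S}
  fintypeV := Fintype.ofFinite _
  decEqV := inferInstance
  adj a b := G.adj a.1 b.1
  symm h := G.symm h
  irrefl a h := G.irrefl a.1 h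
  lab a := G.lab a.1

/-- `G_v^r` : the induced subgraph on the radius-`r` neighbourhood of `v`. -/
noncomputable def ball (G : LGraph p) (v : G.V) (r : ℕ) : LGraph p :=
  G.induce {u | G.within v r u}

/-- The centre of `G_v^r`, as a node of `G_v^r`. -/
noncomputable def ballCenter (G : LGraph p) (v : G.V) (r : ℕ) : (G.ball v r).V :=
  ⟨v, G.within_self v r⟩

end LGraph

/-! ### GNNs -/

/-- A single message-passing layer: aggregation over the multiset of neighbour
embeddings and combination of the node embedding (concatenated via `Fin.append`)
with the aggregated value. -/
structure GNNLayer (Din Dout : ℕ) : Type where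
  agg : Multiset (Fin Din → ℝ) → (Fin Din → ℝ)
  com : (Fin (Din + Din) → ℝ) → (Fin Dout → ℝ)

/-- A `(D,D')`-GNN: a nonempty sequence of layers with matching dimensions. -/
inductive GNN : ℕ → ℕ → Type
  | last {D D'} (l : GNNLayer D D') : GNN D D'
  | cons {D Dm D'} (l : GNNLayer D Dm) (rest : GNN Dm D') : GNN D D'

noncomputable def GNNLayer.apply {p Din Dout : ℕ} (l : GNNLayer Din Dout) (G : LGraph p)
    (emb : G.V → Fin Din → ℝ) : G.V → Fin Dout → ℝ :=
  fun v => l.com (Fin.append (emb v) (l.agg ((G.nbrFinset v).val.map emb)))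

/-- Running a GNN on an embedded graph. -/
noncomputable def GNN.run {p : ℕ} : {D D' : ℕ} → GNN D D' → (G : LGraph p) →
    (G.V → Fin D → ℝ) → (G.V → Fin D' → ℝ)
  | _, _, .last l, G, emb => l.apply G emb
  | _, _, .cons l rest, G, emb => rest.run G (l.apply G emb)

/-- The node classifier of a `(p,1)`-GNN (as a proposition: value `1` ↔ output `> 0`). -/
def GNN.clsP {p : ℕ} (A : GNN p 1) (G : LGraph p) (v : G.V) : Prop :=
  0 < A.run G G.embG v 0

/-- The node classifier of a `(p,1)`-GNN, as a boolean value. -/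
noncomputable def GNN.cls {p : ℕ} (A : GNN p 1) (G : LGraph p) (v : G.V) : Bool :=
  if A.clsP G v then true else false

/-! ### Hierarchical Ego GNNs -/

/-- A `(D,D')`-HE-GNN of nesting depth `d`. -/
inductive HEGNN : ℕ → ℕ → ℕ → Type
  | base {D D'} (A : GNN D D') : HEGNN 0 D D'
  | nest {d D D'' D'} (B : HEGNN d (D+1) D'') (C : GNN (D + D'') D') : HEGNN (d+1) D D'

noncomputable def HEGNN.run {p : ℕ} : {d D D' : ℕ} → HEGNN d D D' → (G : LGraph p) →
    (G.V → Fin D → ℝ) → (G.V → Fin D' → ℝ)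
  | _, _, _, .base A, G, emb => A.run G emb
  | _, _, _, .nest B C, G, emb =>
      C.run G (fun v => Fin.append (emb v)
        (B.run G (fun u => Fin.append (emb u) (fun _ => if u = v then (1:ℝ) else 0)) v))

def HEGNN.clsP {p d : ℕ} (A : HEGNN d p 1) (G : LGraph p) (v : G.V) : Prop :=
  0 < A.run G G.embG v 0

noncomputable def HEGNN.cls {p d : ℕ} (A : HEGNN d p 1) (G : LGraph p) (v : G.V) : Bool :=
  if A.clsP G v then true else false

/-! ### Hierarchical Ego Subgraph GNNs -/

/-- A `(D,D')`-HES-GNN of depth `d`; each nesting step carries its own radius `r`. -/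
inductive HESGNN : ℕ → ℕ → ℕ → Type
  | base {D D'} (A : GNN D D') : HESGNN 0 D D'
  | nest {d D D'' D'} (r : ℕ) (B : HESGNN d (D+1) D'') (C : GNN (D + D'') D') :
      HESGNN (d+1) D D'

noncomputable def HESGNN.run {p : ℕ} : {d D D' : ℕ} → HESGNN d D D' → (G : LGraph p) →
    (G.V → Fin D → ℝ) → (G.V → Fin D' → ℝ)
  | _, _, _, .base A, G, emb => A.run G emb
  | _, _, _, .nest r B C, G, emb =>
      C.run G (fun v => Fin.append (emb v)
        (B.run (G.ball v r)
          (fun u => Fin.append (emb u.1) (fun _ => if u.1 = v then (1:ℝ) else 0))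
          (G.ballCenter v r)))

/-- All subgraph restrictions in the HES-GNN use radius `r`. -/
def HESGNN.radIs : {d D D' : ℕ} → ℕ → HESGNN d D D' → Prop
  | _, _, _, _, .base _ => True
  | _, _, _, r, .nest r' B _ => r' = r ∧ B.radIs r

def HESGNN.clsP {p d : ℕ} (A : HESGNN d p 1) (G : LGraph p) (v : G.V) : Prop :=
  0 < A.run G G.embG v 0

noncomputable def HESGNN.cls {p d : ℕ} (A : HESGNN d p 1) (G : LGraph p) (v : G.V) : Bool :=
  if A.clsP G v then true else false
/-! ### Graded modal logic GML -/

inductive GML (p : ℕ) : Type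
  | prop (i : Fin p)
  | top
  | and (φ ψ : GML p)
  | not (φ : GML p)
  | dia (k : ℕ) (φ : GML p)

/-- Satisfaction of a GML formula at a node. -/
def GML.sat {p : ℕ} (G : LGraph p) : GML p → G.V → Prop
  | .prop i, v => G.lab v i
  | .top, _ => True
  | .and φ ψ, v => φ.sat G v ∧ ψ.sat G v
  | .not φ, v => ¬ φ.sat G v
  | .dia k φ, v => k ≤ Nat.card {u : G.V // G.adj v u ∧ φ.sat G u}

/-! ### Graded hybrid logic GML(↓) -/

inductive GMLd (p : ℕ) : Type
  | prop (i : Fin p)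
  | var (x : ℕ)
  | top
  | and (φ ψ : GMLd p)
  | not (φ : GMLd p)
  | dia (k : ℕ) (φ : GMLd p)
  | bind (x : ℕ) (φ : GMLd p)

/-- Satisfaction of a GML(↓) formula at a node, relative to an assignment of
variables to (marked) nodes; `↓x.φ` marks the current node with `x`. -/
def GMLd.sat {p : ℕ} (G : LGraph p) : GMLd p → (ℕ → Option G.V) → G.V → Prop
  | .prop i, _, v => G.lab v i
  | .var x, g, v => g x = some v
  | .top, _, _ => True
  | .and φ ψ, g, v => φ.sat G g v ∧ ψ.sat G g v
  | .not φ, g, v => ¬ φ.sat G g v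
  | .dia k φ, g, v => k ≤ Nat.card {u : G.V // G.adj v u ∧ φ.sat G g u}
  | .bind x φ, g, v => φ.sat G (Function.update g x (some v)) v

def GMLd.free {p : ℕ} : GMLd p → Set ℕ
  | .prop _ => ∅
  | .var x => {x}
  | .top => ∅
  | .and φ ψ => φ.free ∪ ψ.free
  | .not φ => φ.free
  | .dia _ φ => φ.free
  | .bind x φ => φ.free \ {x}

/-- A sentence has no free variables. -/
def GMLd.Sentence {p : ℕ} (φ : GMLd p) : Prop := φ.free = ∅

/-- The ↓-nesting-depth of a formula. -/
def GMLd.bindDepth {p : ℕ} : GMLd p → ℕ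
  | .prop _ => 0
  | .var _ => 0
  | .top => 0
  | .and φ ψ => max φ.bindDepth ψ.bindDepth
  | .not φ => φ.bindDepth
  | .dia _ φ => φ.bindDepth
  | .bind _ φ => φ.bindDepth + 1

/-- Satisfaction of a sentence (empty assignment). -/
def GMLd.satS {p : ℕ} (G : LGraph p) (φ : GMLd p) (v : G.V) : Prop :=
  φ.sat G (fun _ => none) v

/-! ### Graded hybrid subgraph logic: the fragment GML(↓_W) -/

inductive GMLW (p : ℕ) : Type
  | prop (i : Fin p)
  | var (x : ℕ)
  | top
  | and (φ ψ : GMLW p)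
  | not (φ : GMLW p)
  | dia (k : ℕ) (φ : GMLW p)
  /-- `↓_{W^r} x. φ`, i.e. `↓x. W^r φ`. -/
  | bindW (x : ℕ) (r : ℕ) (φ : GMLW p)

/-- Restrict an assignment along passage to an induced subgraph: markings of
nodes outside the subgraph disappear. -/
noncomputable def restrictAssign {p : ℕ} {G : LGraph p} (S : Set G.V)
    (g : ℕ → Option G.V) : ℕ → Option (G.induce S).V :=
  fun x => (g x).bind (fun w => if h : w ∈ S then some ⟨w, h⟩ else none)

/-- Satisfaction for the fragment GML(↓_W): `↓x.W^r φ` marks the current node `v`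
with `x` and evaluates `φ` in the subgraph `G_v^r`. -/
noncomputable def GMLW.sat {p : ℕ} : GMLW p → (G : LGraph p) → (ℕ → Option G.V) → G.V → Prop
  | .prop i, G, _, v => G.lab v i
  | .var x, _, g, v => g x = some v
  | .top, _, _, _ => True
  | .and φ ψ, G, g, v => φ.sat G g v ∧ ψ.sat G g v
  | .not φ, G, g, v => ¬ φ.sat G g v
  | .dia k φ, G, g, v => k ≤ Nat.card {u : G.V // G.adj v u ∧ φ.sat G g u}
  | .bindW x r φ, G, g, v =>
      φ.sat (G.ball v r) (restrictAssign _ (Function.update g x (some v))) (G.ballCenter v r)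

def GMLW.free {p : ℕ} : GMLW p → Set ℕ
  | .prop _ => ∅
  | .var x => {x}
  | .top => ∅
  | .and φ ψ => φ.free ∪ ψ.free
  | .not φ => φ.free
  | .dia _ φ => φ.free
  | .bindW x _ φ => φ.free \ {x}

def GMLW.Sentence {p : ℕ} (φ : GMLW p) : Prop := φ.free = ∅

/-- The nesting depth of `↓_{W^r}` operators. -/
def GMLW.bindDepth {p : ℕ} : GMLW p → ℕ
  | .prop _ => 0
  | .var _ => 0
  | .top => 0
  | .and φ ψ => max φ.bindDepth ψ.bindDepth
  | .not φ => φ.bindDepth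
  | .dia _ φ => φ.bindDepth
  | .bindW _ _ φ => φ.bindDepth + 1

/-- All `↓_{W}` operators in the formula use radius `r`. -/
def GMLW.radIs {p : ℕ} (r : ℕ) : GMLW p → Prop
  | .prop _ => True
  | .var _ => True
  | .top => True
  | .and φ ψ => φ.radIs r ∧ ψ.radIs r
  | .not φ => φ.radIs r
  | .dia _ φ => φ.radIs r
  | .bindW _ r' φ => r' = r ∧ φ.radIs r

noncomputable def GMLW.satS {p : ℕ} (G : LGraph p) (φ : GMLW p) (v : G.V) : Prop :=
  φ.sat G (fun _ => none) v
/-! ### Weisfeiler–Leman and Individualization-Refinement -/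

/-- An (ordered) space of colors together with a perfect (injective) hash
function whose domains are: node labelings (initial colors), pairs of a color
and a multiset of colors (refinement), and pairs of a color and a marking
(individualization). -/
structure HashSetup (p : ℕ) : Type 1 where
  C : Type
  linC : LinearOrder C
  hInit : (Fin p → Prop) → C
  hRefine : C → Multiset C → C
  hIndiv : C → Prop → C
  inj : Function.Injective
    (Sum.elim hInit (Sum.elim (fun y : C × Multiset C => hRefine y.1 y.2)
      (fun y : C × Prop => hIndiv y.1 y.2)))

/-- A coloring is discrete if all color classes are singletons. -/
def Discrete {V C : Type} (col : V → C) : Prop :=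
  ∀ u w, col u = col w → u = w

/-- One round of color refinement. -/
noncomputable def wlStep {p : ℕ} (H : HashSetup p) (G : LGraph p)
    (col : G.V → H.C) : G.V → H.C :=
  fun v => H.hRefine (col v) ((G.nbrFinset v).val.map col)

/-- `wlIter H G d col` = `WL(G, col, d)`. -/
noncomputable def wlIter {p : ℕ} (H : HashSetup p) (G : LGraph p) :
    ℕ → (G.V → H.C) → (G.V → H.C)
  | 0, col => col
  | (d+1), col => wlStep H G (wlIter H G d col)

/-- The initial coloring `col_G`. -/
noncomputable def initCol {p : ℕ} (H : HashSetup p) (G : LGraph p) : G.V → H.C :=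
  fun v => H.hInit (G.lab v)

/-- Rose trees labeled by multisets of colors.  (Children are kept in a list;
the isomorphism relation below disregards their order.) -/
inductive CTree (C : Type) : Type
  | node (label : Multiset C) (children : List (CTree C))

/-- Isomorphism of trees whose nodes are labeled by multisets of colors. -/
inductive CTree.Iso {C : Type} : CTree C → CTree C → Prop
  | node {l : Multiset C} {cs1 cs2 : List (CTree C)}
      (e : Fin cs1.length ≃ Fin cs2.length)
      (h : ∀ i : Fin cs1.length, CTree.Iso (cs1.get i) (cs2.get (e i))) :
      CTree.Iso (.node l cs1) (.node l cs2)

/-- The multiset of all colors of a coloring. -/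
noncomputable def colMultiset {p : ℕ} (H : HashSetup p) (G : LGraph p)
    (col : G.V → H.C) : Multiset H.C :=
  Finset.univ.val.map col

/-- `WLIR H G d col` = the IR tree `WL-IR(G, col, d)` with at most `d`
individualization steps, with colorings recorded by their color multisets. -/
noncomputable def WLIR {p : ℕ} (H : HashSetup p) (G : LGraph p) :
    ℕ → (G.V → H.C) → CTree H.C
  | 0, col => .node (colMultiset H G (wlIter H G (Fintype.card G.V) col)) []
  | (d+1), col =>
    let col' := wlIter H G (Fintype.card G.V) col
    if hdisc : Discrete col' then .node (colMultiset H G col') []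
    else
      letI := H.linC
      let bigs : Finset H.C := (Finset.univ.image col').filter
        (fun c => 1 < (Finset.univ.filter (fun v => col' v = c)).card)
      have hne : bigs.Nonempty := by
        simp only [Discrete, not_forall] at hdisc
        obtain ⟨u, w, hc, hne'⟩ := hdisc
        refine ⟨col' u, Finset.mem_filter.mpr
          ⟨Finset.mem_image_of_mem _ (Finset.mem_univ u), ?_⟩⟩
        exact Finset.one_lt_card.mpr
          ⟨u, by simp, w, by simp [hc.symm], hne'⟩
      let c := bigs.min' hne
      .node (colMultiset H G col')
        (((Finset.univ.filter (fun v => col' v = c)).toList).map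
          (fun vi => WLIR H G d (fun v => H.hIndiv (col' v) (v = vi))))

/-- `G ≡_{WL-IR-d} G'` : the IR trees with `d` individualization steps are
isomorphic. -/
noncomputable def WLIRequiv {p : ℕ} (H : HashSetup p) (G G' : LGraph p) (d : ℕ) : Prop :=
  CTree.Iso (WLIR H G d (initCol H G)) (WLIR H G' d (initCol H G'))

/-- Isomorphism of labeled graphs. -/
def LGraph.Iso {p : ℕ} (G G' : LGraph p) : Prop :=
  ∃ f : G.V ≃ G'.V, (∀ u v, G.adj u v ↔ G'.adj (f u) (f v)) ∧
    ∀ v i, G.lab v i ↔ G'.lab (f v) i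
/-! ### The k-dimensional Weisfeiler–Leman test -/

/-- The type of `k`-WL colors after `i` refinement rounds (shared between all
graphs, so colors of different graphs are directly comparable). -/
def KColor (p k : ℕ) : ℕ → Type
  | 0 => ((Fin k → Fin k → Prop) × (Fin k → Fin k → Prop) × (Fin k → Fin p → Prop))
  | (i+1) => KColor p k i × (Fin k → Multiset (KColor p k i))

/-- The `k`-WL coloring of `k`-tuples after `i` rounds: the initial color is the
isomorphism type of the tuple (equalities, adjacencies, labels); each round
refines by, for each position, the multiset of colors of all one-point
modifications of the tuple. -/
noncomputable def kwl (p k : ℕ) (G : LGraph p) :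
    (i : ℕ) → (Fin k → G.V) → KColor p k i
  | 0, t => (fun i j => t i = t j, fun i j => G.adj (t i) (t j), fun i a => G.lab (t i) a)
  | (i+1), t => (kwl p k G i t,
      fun j => Finset.univ.val.map (fun w => kwl p k G i (Function.update t j w)))

/-- `(G,v)` and `(G',v')` are *not* distinguished by the `k`-dimensional WL test:
the colors of the constant tuples `(v,…,v)` and `(v',…,v')` agree at every round
(equivalently, the stable colors agree). -/
noncomputable def kwlEquiv (p k : ℕ) (G : LGraph p) (v : G.V) (G' : LGraph p) (v' : G'.V) : Prop :=
  ∀ i : ℕ, kwl p k G i (fun _ => v) = kwl p k G' i (fun _ => v')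
/-! ### Rooted graphs, homomorphism counts, Sum/ReLU-FFNN GNNs, degree bounds -/

namespace LGraph
variable {p : ℕ}

/-- `(F,u)` is a rooted graph: every node is reachable from `u`. -/
def Rooted (F : LGraph p) (u : F.V) : Prop := ∀ w, ∃ r, F.within u r w

/-- Every node of `G` has degree at most `N`. -/
def degLe (G : LGraph p) (N : ℕ) : Prop := ∀ v, Nat.card {u : G.V // G.adj v u} ≤ N

end LGraph

/-- The number of homomorphisms from the pointed graph `(F,u)` to `(G,v)`:
maps sending the root to `v`, preserving edges, and preserving labels. -/
noncomputable def homCount {p : ℕ} (F G : LGraph p) (u : F.V) (v : G.V) : ℕ :=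
  Nat.card {h : F.V → G.V //
    h u = v ∧ (∀ ⦃w w'⦄, F.adj w w' → G.adj (h w) (h w')) ∧
    ∀ w i, F.lab w i → G.lab (h w) i}

/-- Pointwise sum aggregation. -/
def sumAgg (D : ℕ) : Multiset (Fin D → ℝ) → (Fin D → ℝ) :=
  fun M i => (M.map (fun x => x i)).sum

/-- ReLU feed-forward neural networks: compositions of affine maps and
coordinatewise ReLU. -/
inductive IsReLUFFNN : {n m : ℕ} → ((Fin n → ℝ) → (Fin m → ℝ)) → Prop
  | affine {n m : ℕ} (W : Matrix (Fin m) (Fin n) ℝ) (b : Fin m → ℝ) :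
      IsReLUFFNN (fun x => W.mulVec x + b)
  | relu {n : ℕ} : IsReLUFFNN (fun (x : Fin n → ℝ) i => max 0 (x i))
  | comp {n m k : ℕ} {f : (Fin n → ℝ) → (Fin m → ℝ)} {g : (Fin m → ℝ) → (Fin k → ℝ)} :
      IsReLUFFNN f → IsReLUFFNN g → IsReLUFFNN (fun x => g (f x))

/-- A layer uses Sum aggregation and a ReLU-FFNN combination function. -/
def GNNLayer.SumReLU {Din Dout : ℕ} (l : GNNLayer Din Dout) : Prop :=
  l.agg = sumAgg Din ∧ IsReLUFFNN l.com

def GNN.SumReLU : {D D' : ℕ} → GNN D D' → Prop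
  | _, _, .last l => l.SumReLU
  | _, _, .cons l rest => l.SumReLU ∧ rest.SumReLU

def HEGNN.SumReLU : {d D D' : ℕ} → HEGNN d D D' → Prop
  | _, _, _, .base A => A.SumReLU
  | _, _, _, .nest B C => B.SumReLU ∧ C.SumReLU
/-! ### Cycles, acyclicity, ego-rank, tree-width -/

namespace LGraph
variable {p : ℕ}

/-- There is a cycle (length ≥ 3, distinct nodes, consecutive nodes adjacent,
cyclically) all of whose nodes lie in `S`. -/
def CycleIn (G : LGraph p) (S : Set G.V) : Prop :=
  ∃ (n : ℕ) (c : Fin n → G.V), 3 ≤ n ∧ Function.Injective c ∧ (∀ i, c i ∈ S) ∧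
    ∀ i : Fin n, G.adj (c i) (c ⟨(i.val + 1) % n, Nat.mod_lt _ i.pos⟩)

/-- `G` is acyclic. -/
def Acyclic (G : LGraph p) : Prop := ¬ G.CycleIn Set.univ

/-- `(G,v)` is c-acyclic: every cycle of `G` passes through `v`. -/
def CAcyclic (G : LGraph p) (v : G.V) : Prop :=
  ∀ (n : ℕ) (c : Fin n → G.V), 3 ≤ n → Function.Injective c →
    (∀ i : Fin n, G.adj (c i) (c ⟨(i.val + 1) % n, Nat.mod_lt _ i.pos⟩)) →
    ∃ i, c i = v

/-- Reachability inside a set `S` (paths are required to stay in `S`). -/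
inductive ReachIn (G : LGraph p) (S : Set G.V) : G.V → G.V → Prop
  | refl {a} (ha : a ∈ S) : ReachIn G S a a
  | tail {a b c} : ReachIn G S a b → G.adj b c → c ∈ S → ReachIn G S a c

/-- The set `S` induces a connected subgraph. -/
def ConnectedIn (G : LGraph p) (S : Set G.V) : Prop :=
  ∀ a ∈ S, ∀ b ∈ S, G.ReachIn S a b

/-- `G` is connected. -/
def Connected (G : LGraph p) : Prop := ∀ a b : G.V, ∃ r, G.within a r b

end LGraph

/-! #### Ego-rank -/

/-- Transitive closure of a partial map `dep` (so `DepCl dep w x` means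
`x ∈ deps(w) = {dep(w), dep(dep(w)), …} \ {⊥}`). -/
inductive DepCl {V : Type} (dep : V → Option V) : V → V → Prop
  | base {w x} : dep w = some x → DepCl dep w x
  | step {w x y} : DepCl dep w x → dep x = some y → DepCl dep w y

/-- `deps(w)` as a set. -/
def deps {V : Type} (dep : V → Option V) (w : V) : Set V := {x | DepCl dep w x}

/-- `dep` is a dependency function for the rooted graph `(G,v)`. -/
def IsDepFun {p : ℕ} (G : LGraph p) (v : G.V) (dep : G.V → Option G.V) : Prop :=
  dep v = none ∧
  (∀ {w u}, G.adj w u → dep w = dep u ∨ w ∈ deps dep u ∨ u ∈ deps dep w) ∧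
  (∀ o : Option G.V, ¬ G.CycleIn {w | dep w = o})

/-- The node rank of a node: `|deps(w)|`. -/
noncomputable def nodeRank {V : Type} (dep : V → Option V) (w : V) : ℕ :=
  Nat.card {x // DepCl dep w x}

/-- Ego-rank: the smallest achievable maximum node rank over all dependency
functions. -/
noncomputable def egoRank {p : ℕ} (G : LGraph p) (v : G.V) : ℕ :=
  sInf {k | ∃ dep, IsDepFun G v dep ∧ ∀ w, nodeRank dep w ≤ k}

/-! #### Tree decompositions and tree-width -/

/-- A tree decomposition of `G`: a (connected, acyclic) tree `T` with bags
covering all nodes and edges, such that each node's bags form a connected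
subtree. -/
structure TreeDecomp (p : ℕ) (G : LGraph p) : Type 1 where
  T : LGraph 0
  conn : T.Connected
  acyc : T.Acyclic
  bag : T.V → Set G.V
  cover_v : ∀ u : G.V, ∃ t, u ∈ bag t
  cover_e : ∀ {u w : G.V}, G.adj u w → ∃ t, u ∈ bag t ∧ w ∈ bag t
  subtree : ∀ u : G.V, T.ConnectedIn {t | u ∈ bag t}

/-- Tree-width: minimum over tree decompositions of (maximum bag size − 1). -/
noncomputable def treewidth {p : ℕ} (G : LGraph p) : ℕ :=
  sInf {w | ∃ D : TreeDecomp p G, ∀ t, Nat.card (D.bag t) ≤ w + 1}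
/-! ### Special graphs: cycles, disjoint unions, grids (all labels empty) -/

/-- The cycle graph `C_n` (for `n ≥ 3`), with empty node labels. -/
def cycleGraph (p n : ℕ) : LGraph p where
  V := Fin n
  fintypeV := inferInstance
  decEqV := inferInstance
  adj i j := i ≠ j ∧ ((i.val + 1) % n = j.val ∨ (j.val + 1) % n = i.val)
  symm h := ⟨h.1.symm, h.2.symm⟩
  irrefl _ h := h.1 rfl
  lab _ _ := False

/-- Disjoint union of two graphs. -/
def LGraph.disjUnion {p : ℕ} (G1 G2 : LGraph p) : LGraph p where
  V := G1.V ⊕ G2.V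
  fintypeV := inferInstance
  decEqV := inferInstance
  adj a b :=
    match a, b with
    | .inl x, .inl y => G1.adj x y
    | .inr x, .inr y => G2.adj x y
    | _, _ => False
  symm {a b} h := by
    cases a <;> cases b <;> simp_all <;> first | exact G1.symm h | exact G2.symm h
  irrefl a h := by
    cases a
    · exact G1.irrefl _ h
    · exact G2.irrefl _ h
  lab a i :=
    match a with
    | .inl x => G1.lab x i
    | .inr x => G2.lab x i

/-- The `n × 2` grid graph, with empty node labels. -/
def gridGraph (p n : ℕ) : LGraph p where
  V := Fin n × Fin 2
  fintypeV := inferInstance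
  decEqV := inferInstance
  adj a b := (a.2 = b.2 ∧ (a.1.val + 1 = b.1.val ∨ b.1.val + 1 = a.1.val)) ∨
    (a.1 = b.1 ∧ a.2 ≠ b.2)
  symm h := by
    rcases h with ⟨h1, h2⟩ | ⟨h1, h2⟩
    · exact Or.inl ⟨h1.symm, h2.symm⟩
    · exact Or.inr ⟨h1.symm, h2.symm⟩
  irrefl a h := by
    rcases h with ⟨_, h2 | h2⟩ | ⟨_, h2⟩
    · omega
    · omega
    · exact h2 rfl
  lab _ _ := False
/-! ### The witness graphs of Rattan–Seppelt: a central 4-cycle with attached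
triangles and 6-cycles. -/

/-- Vertex type: 4 square nodes, 4 triangles (3 nodes each), 4 hexagons
(6 nodes each). -/
abbrev RSV : Type := Fin 4 ⊕ (Fin 4 × Fin 3) ⊕ (Fin 4 × Fin 6)

/-- Adjacency, parameterized by the owner (square corner) of each triangle and
of each hexagon: the square is a 4-cycle; each triangle/hexagon is complete to
its owner; triangles are 3-cycles, hexagons are 6-cycles. -/
def rsAdj (tO hO : Fin 4 → Fin 4) : RSV → RSV → Prop
  | .inl a, .inl b => a ≠ b ∧ ((a.val + 1) % 4 = b.val ∨ (b.val + 1) % 4 = a.val)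
  | .inl a, .inr (.inl (t, _)) => a = tO t
  | .inr (.inl (t, _)), .inl a => a = tO t
  | .inl a, .inr (.inr (s, _)) => a = hO s
  | .inr (.inr (s, _)), .inl a => a = hO s
  | .inr (.inl (t, i)), .inr (.inl (t', i')) => t = t' ∧ i ≠ i'
  | .inr (.inr (s, j)), .inr (.inr (s', j')) =>
      s = s' ∧ ((j.val + 1) % 6 = j'.val ∨ (j'.val + 1) % 6 = j.val)
  | _, _ => False

def rsGraph (p : ℕ) (tO hO : Fin 4 → Fin 4) : LGraph p where
  V := RSV
  fintypeV := inferInstance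
  decEqV := inferInstance
  adj := rsAdj tO hO
  symm {u v} h := by
    rcases u with a | ⟨t, i⟩ | ⟨s, j⟩ <;> rcases v with b | ⟨t', i'⟩ | ⟨s', j'⟩ <;>
      simp only [rsAdj] at h ⊢ <;> tauto
  irrefl u h := by
    rcases u with a | ⟨t, i⟩ | ⟨s, j⟩ <;> simp only [rsAdj] at h <;> omega
  lab _ _ := False

/-- `G`: triangles attached to `u₁` (index 0) and `u₄` (index 3), hexagons to
`u₂` (index 1) and `u₃` (index 2). -/
def rsG (p : ℕ) : LGraph p :=
  rsGraph p (fun t => if t.val < 2 then 0 else 3) (fun s => if s.val < 2 then 1 else 2)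

/-- `G'`: triangles attached to the opposite corners `u₁` (index 0) and `u₃`
(index 2), hexagons to `u₂` (index 1) and `u₄` (index 3). -/
def rsG' (p : ℕ) : LGraph p :=
  rsGraph p (fun t => if t.val < 2 then 0 else 2) (fun s => if s.val < 2 then 1 else 3)
/-! ### LGraph-level separation by node classifiers -/

/-- `G ≡_{GNN} G'`: for every GNN node classifier, the multisets of classifier
values over all nodes coincide. -/
noncomputable def gnnGraphEquiv (p : ℕ) (G G' : LGraph p) : Prop :=
  ∀ A : GNN p 1, Finset.univ.val.map (A.cls G) = Finset.univ.val.map (A.cls G')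

/-- `G ≡_{HE-GNN-(d)} G'`: for every HE-GNN node classifier of nesting depth
`d`, the multisets of classifier values over all nodes coincide. -/
noncomputable def hegnnGraphEquiv (p d : ℕ) (G G' : LGraph p) : Prop :=
  ∀ A : HEGNN d p 1, Finset.univ.val.map (A.cls G) = Finset.univ.val.map (A.cls G')

/-- The eccentricity of `u` in `G`: the maximal distance from `u` to any node. -/
noncomputable def LGraph.eccFrom {p : ℕ} (G : LGraph p) (u : G.V) : ℕ :=
  Finset.univ.sup (fun w => sInf {r | G.within u r w})


/-! ### Auxiliary development for `gml_to_gnn` -/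

namespace GmlGnn

open Finset

variable {p : ℕ}

lemma sum_ind {n : ℕ} (s0 : Fin n) (z : Fin n → ℝ) :
    (∑ s, (if s = s0 then (1:ℝ) else 0) * z s) = z s0 := by
  simp [ite_mul]

lemma sum_ind2 {n : ℕ} (s1 s2 : Fin n) (z : Fin n → ℝ) :
    (∑ s, ((if s = s1 then (1:ℝ) else 0) + (if s = s2 then 1 else 0)) * z s)
      = z s1 + z s2 := by
  simp [add_mul, Finset.sum_add_distrib, ite_mul]

lemma sum_two {n : ℕ} {t1 t2 : Fin n} (hne : t1 ≠ t2) (u v : ℝ) (h : Fin n → ℝ) :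
    (∑ t, (if t = t1 then u else if t = t2 then v else 0) * h t)
      = u * h t1 + v * h t2 := by
  have key : ∀ t : Fin n, (if t = t1 then u else if t = t2 then v else 0) * h t
      = (if t = t1 then u * h t1 else 0) + (if t = t2 then v * h t2 else 0) := by
    intro t
    by_cases h1 : t = t1
    · subst h1; simp [hne]
    · by_cases h2 : t = t2
      · subst h2; simp [h1]
      · simp [h1, h2]
  rw [Finset.sum_congr rfl (fun t _ => key t), Finset.sum_add_distrib]
  simp

/-- A list containing all subformulas of a formula. -/
def subList : GML p → List (GML p)
  | .prop i => [.prop i]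
  | .top => [.top]
  | .and a b => subList a ++ subList b ++ [.and a b]
  | .not a => subList a ++ [.not a]
  | .dia k a => subList a ++ [.dia k a]

lemma self_mem_subList (φ : GML p) : φ ∈ subList φ := by
  cases φ <;> simp [subList]

/-- Height of a formula. -/
def hgt : GML p → ℕ
  | .prop _ => 1
  | .top => 1
  | .and a b => max (hgt a) (hgt b) + 1
  | .not a => hgt a + 1
  | .dia _ a => hgt a + 1

lemma hgt_pos (φ : GML p) : 1 ≤ hgt φ := by
  cases φ <;> simp [hgt]

lemma subList_and : ∀ {φ a b : GML p}, GML.and a b ∈ subList φ →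
    a ∈ subList φ ∧ b ∈ subList φ := by
  intro φ
  induction φ with
  | prop i => intro a b h; simp [subList] at h
  | top => intro a b h; simp [subList] at h
  | and a1 b1 ih1 ih2 =>
    intro a b h
    simp only [subList, List.mem_append, List.mem_singleton] at h
    rcases h with ((h | h) | h)
    · obtain ⟨h1, h2⟩ := ih1 h
      exact ⟨by simp [subList, List.mem_append, h1],
             by simp [subList, List.mem_append, h2]⟩
    · obtain ⟨h1, h2⟩ := ih2 h
      exact ⟨by simp [subList, List.mem_append, h1],
             by simp [subList, List.mem_append, h2]⟩
    · injection h with h1 h2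
      subst h1; subst h2
      exact ⟨by simp [subList, List.mem_append, self_mem_subList],
             by simp [subList, List.mem_append, self_mem_subList]⟩
  | not a1 ih =>
    intro a b h
    simp only [subList, List.mem_append, List.mem_singleton] at h
    rcases h with h | h
    · obtain ⟨h1, h2⟩ := ih h
      exact ⟨by simp [subList, List.mem_append, h1],
             by simp [subList, List.mem_append, h2]⟩
    · simp at h
  | dia k a1 ih =>
    intro a b h
    simp only [subList, List.mem_append, List.mem_singleton] at h
    rcases h with h | h
    · obtain ⟨h1, h2⟩ := ih h
      exact ⟨by simp [subList, List.mem_append, h1],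
             by simp [subList, List.mem_append, h2]⟩
    · simp at h

lemma subList_not : ∀ {φ a : GML p}, GML.not a ∈ subList φ → a ∈ subList φ := by
  intro φ
  induction φ with
  | prop i => intro a h; simp [subList] at h
  | top => intro a h; simp [subList] at h
  | and a1 b1 ih1 ih2 =>
    intro a h
    simp only [subList, List.mem_append, List.mem_singleton] at h
    rcases h with ((h | h) | h)
    · simp [subList, List.mem_append, ih1 h]
    · simp [subList, List.mem_append, ih2 h]
    · simp at h
  | not a1 ih =>
    intro a h
    simp only [subList, List.mem_append, List.mem_singleton] at h
    rcases h with h | h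
    · simp [subList, List.mem_append, ih h]
    · injection h with h1
      subst h1
      simp [subList, List.mem_append, self_mem_subList]
  | dia k a1 ih =>
    intro a h
    simp only [subList, List.mem_append, List.mem_singleton] at h
    rcases h with h | h
    · simp [subList, List.mem_append, ih h]
    · simp at h

lemma subList_dia : ∀ {φ a : GML p} {k : ℕ}, GML.dia k a ∈ subList φ → a ∈ subList φ := by
  intro φ
  induction φ with
  | prop i => intro a k h; simp [subList] at h
  | top => intro a k h; simp [subList] at h
  | and a1 b1 ih1 ih2 =>
    intro a k h
    simp only [subList, List.mem_append, List.mem_singleton] at h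
    rcases h with ((h | h) | h)
    · simp [subList, List.mem_append, ih1 h]
    · simp [subList, List.mem_append, ih2 h]
    · simp at h
  | not a1 ih =>
    intro a k h
    simp only [subList, List.mem_append, List.mem_singleton] at h
    rcases h with h | h
    · simp [subList, List.mem_append, ih h]
    · simp at h
  | dia k1 a1 ih =>
    intro a k h
    simp only [subList, List.mem_append, List.mem_singleton] at h
    rcases h with h | h
    · simp [subList, List.mem_append, ih h]
    · injection h with h1 h2
      subst h2
      simp [subList, List.mem_append, self_mem_subList]

/-- Dimension of the state space: one coordinate per (occurrence of a) subformula. -/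
abbrev M (φ : GML p) : ℕ := (subList φ).length

lemma M_pos (φ : GML p) : 0 < M φ :=
  List.length_pos_iff.mpr (List.ne_nil_of_mem (self_mem_subList φ))

/-- The index of a subformula in the state vector. -/
noncomputable def fidx (φ ψ : GML p) : Fin (M φ) :=
  if h : ψ ∈ subList φ then Classical.choose (List.mem_iff_get.mp h) else ⟨0, M_pos φ⟩

lemma get_fidx {φ ψ : GML p} (h : ψ ∈ subList φ) : (subList φ).get (fidx φ ψ) = ψ := by
  rw [fidx, dif_pos h]
  exact Classical.choose_spec (List.mem_iff_get.mp h)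

/-- Canonical two-layer form `affine ∘ ReLU ∘ affine`. -/
noncomputable def canon {n m T : ℕ} (W : Fin T → Fin n → ℝ) (d : Fin T → ℝ)
    (c : Fin m → Fin T → ℝ) (b : Fin m → ℝ) : (Fin n → ℝ) → (Fin m → ℝ) :=
  fun z j => (∑ t, c j t * max 0 ((∑ s, W t s * z s) + d t)) + b j

lemma canon_relu {n m T : ℕ} (W : Fin T → Fin n → ℝ) (d : Fin T → ℝ)
    (c : Fin m → Fin T → ℝ) (b : Fin m → ℝ) : IsReLUFFNN (canon W d c b) := by
  have h := IsReLUFFNN.comp (IsReLUFFNN.comp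
    (IsReLUFFNN.affine (Matrix.of W) d) (IsReLUFFNN.relu))
    (IsReLUFFNN.affine (Matrix.of c) b)
  convert h using 1
  funext z j
  simp only [canon, Matrix.mulVec, dotProduct, Matrix.of_apply, Pi.add_apply]

/-! Coefficients of the layers. -/

def w1f : GML p → Fin (p + p) → ℝ
  | .prop i => fun s => if s = Fin.castAdd p i then 1 else 0
  | _ => fun _ => 0

def b1f : GML p → ℝ
  | .top => 1
  | _ => 0

def b2f : GML p → ℝ
  | .top => 1
  | .not _ => 1
  | .dia 0 _ => 1
  | _ => 0

def cpf : GML p → ℝ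
  | .top => 0
  | .not _ => -1
  | .dia 0 _ => 0
  | _ => 1

def csf : GML p → ℝ
  | .dia (_+1) _ => -1
  | _ => 0

def dpf : GML p → ℝ
  | .and _ _ => -1
  | .dia (k+1) _ => -(k:ℝ)
  | _ => 0

def dsf : GML p → ℝ
  | .dia (k+1) _ => -(k:ℝ) - 1
  | _ => 0

noncomputable def wpf (φ : GML p) : GML p → Fin (M φ) → Fin (M φ + M φ) → ℝ
  | .prop _, j => fun s => if s = Fin.castAdd (M φ) j then 1 else 0
  | .and a b, _ => fun s => (if s = Fin.castAdd (M φ) (fidx φ a) then 1 else 0)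
      + (if s = Fin.castAdd (M φ) (fidx φ b) then 1 else 0)
  | .not a, _ => fun s => if s = Fin.castAdd (M φ) (fidx φ a) then 1 else 0
  | .dia _ a, _ => fun s => if s = Fin.natAdd (M φ) (fidx φ a) then 1 else 0
  | _, _ => fun _ => 0

noncomputable def wsf (φ : GML p) : GML p → Fin (M φ + M φ) → ℝ
  | .dia _ a => fun s => if s = Fin.natAdd (M φ) (fidx φ a) then 1 else 0
  | _ => fun _ => 0

/-! The layers. -/

noncomputable def lay1 (φ : GML p) : GNNLayer p (M φ) :=
  ⟨sumAgg p,
   fun z => (Matrix.of fun j s => w1f ((subList φ).get j) s).mulVec z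
      + (fun j => b1f ((subList φ).get j))⟩

noncomputable def lay2 (φ : GML p) : GNNLayer (M φ) (M φ) :=
  ⟨sumAgg (M φ),
   canon (Fin.append (fun j => wpf φ ((subList φ).get j) j)
                     (fun j => wsf φ ((subList φ).get j)))
         (Fin.append (fun j => dpf ((subList φ).get j))
                     (fun j => dsf ((subList φ).get j)))
         (fun j t => if t = Fin.castAdd (M φ) j then cpf ((subList φ).get j)
            else if t = Fin.natAdd (M φ) j then csf ((subList φ).get j) else 0)
         (fun j => b2f ((subList φ).get j))⟩

noncomputable def lay3 (φ : GML p) : GNNLayer (M φ) 1 :=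
  ⟨sumAgg (M φ),
   fun z => (Matrix.of fun (_ : Fin 1) s =>
      if s = Fin.castAdd (M φ) (fidx φ φ) then (1:ℝ) else 0).mulVec z + 0⟩

/-- The invariant: coordinates of subformulas of height at most `i` are correct. -/
def Inv (φ : GML p) (G : LGraph p) (i : ℕ) (emb : G.V → Fin (M φ) → ℝ) : Prop :=
  ∀ (v : G.V) (j : Fin (M φ)), hgt ((subList φ).get j) ≤ i →
    emb v j = if ((subList φ).get j).sat G v then 1 else 0

lemma agg_eq (φ : GML p) (G : LGraph p) (emb : G.V → Fin (M φ) → ℝ) (v : G.V)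
    (ja : Fin (M φ)) (ψ : GML p)
    (hcor : ∀ u, emb u ja = if ψ.sat G u then 1 else 0) :
    sumAgg (M φ) ((G.nbrFinset v).val.map emb) ja
      = (Nat.card {u : G.V // G.adj v u ∧ ψ.sat G u} : ℝ) := by
  have h1 : sumAgg (M φ) ((G.nbrFinset v).val.map emb) ja
      = ∑ u ∈ G.nbrFinset v, emb u ja := by
    simp only [sumAgg, Multiset.map_map]
    rfl
  rw [h1, Finset.sum_congr rfl (fun u _ => hcor u), Finset.sum_boole]
  congr 1
  rw [Nat.card_eq_fintype_card, Fintype.card_subtype]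
  rw [LGraph.nbrFinset, Finset.filter_filter]

lemma inv_one (φ : GML p) (G : LGraph p) : Inv φ G 1 ((lay1 φ).apply G G.embG) := by
  intro v j hle
  simp only [GNNLayer.apply, lay1, Matrix.mulVec, dotProduct, Matrix.of_apply,
    Pi.add_apply]
  cases hψ : (subList φ).get j with
  | prop i =>
    simp only [w1f, b1f]
    rw [sum_ind, Fin.append_left]
    simp [LGraph.embG, GML.sat]
    exact if_congr Iff.rfl rfl rfl
  | top =>
    simp [w1f, b1f, GML.sat]
  | and a b =>
    rw [hψ] at hle
    have h1 := hgt_pos a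
    have h2 := le_max_left (hgt a) (hgt b)
    simp [hgt] at hle
    omega
  | not a =>
    rw [hψ] at hle
    have h1 := hgt_pos a
    simp [hgt] at hle
    omega
  | dia k a =>
    rw [hψ] at hle
    have h1 := hgt_pos a
    simp [hgt] at hle
    omega

lemma inv_step (φ : GML p) (G : LGraph p) {i : ℕ} (hi : 1 ≤ i)
    {emb : G.V → Fin (M φ) → ℝ} (h : Inv φ G i emb) :
    Inv φ G (i + 1) ((lay2 φ).apply G emb) := by
  intro v j hle
  have hmem : (subList φ).get j ∈ subList φ := List.get_mem _ _
  have hne : Fin.castAdd (M φ) j ≠ Fin.natAdd (M φ) j := by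
    have hj := j.2
    intro hcontra
    have h2 := congrArg Fin.val hcontra
    simp only [Fin.coe_castAdd, Fin.coe_natAdd] at h2
    omega
  simp only [GNNLayer.apply, lay2, canon]
  rw [sum_two hne]
  simp only [Fin.append_left, Fin.append_right]
  cases hψ : (subList φ).get j with
  | prop q =>
    rw [hψ] at hmem
    have hx := h v j (by rw [hψ]; simpa [hgt] using hi)
    rw [hψ] at hx
    simp only [cpf, csf, dpf, dsf, b2f, wpf, wsf]
    rw [sum_ind, Fin.append_left, hx]
    by_cases hs : (GML.prop q).sat G v <;> simp [hs]
  | top =>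
    simp [cpf, csf, b2f, GML.sat]
  | and a b =>
    rw [hψ] at hmem
    obtain ⟨ha, hb⟩ := subList_and hmem
    have hha : hgt a ≤ i := by
      rw [hψ] at hle
      have := le_max_left (hgt a) (hgt b)
      simp [hgt] at hle
      omega
    have hhb : hgt b ≤ i := by
      rw [hψ] at hle
      have := le_max_right (hgt a) (hgt b)
      simp [hgt] at hle
      omega
    have hxa := h v (fidx φ a) (by rw [get_fidx ha]; exact hha)
    rw [get_fidx ha] at hxa
    have hxb := h v (fidx φ b) (by rw [get_fidx hb]; exact hhb)
    rw [get_fidx hb] at hxb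
    simp only [cpf, csf, dpf, dsf, b2f, wpf, wsf]
    rw [sum_ind2, Fin.append_left, Fin.append_left, hxa, hxb]
    simp only [GML.sat]
    by_cases hsa : a.sat G v <;> by_cases hsb : b.sat G v <;>
      simp [hsa, hsb]
  | not a =>
    rw [hψ] at hmem
    have ha := subList_not hmem
    have hha : hgt a ≤ i := by
      rw [hψ] at hle
      simp [hgt] at hle
      omega
    have hxa := h v (fidx φ a) (by rw [get_fidx ha]; exact hha)
    rw [get_fidx ha] at hxa
    simp only [cpf, csf, dpf, dsf, b2f, wpf, wsf]
    rw [sum_ind, Fin.append_left, hxa]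
    simp only [GML.sat]
    by_cases hsa : a.sat G v <;> simp [hsa]
  | dia k a =>
    rw [hψ] at hmem
    have ha := subList_dia hmem
    have hha : hgt a ≤ i := by
      rw [hψ] at hle
      simp [hgt] at hle
      omega
    have hcor : ∀ u, emb u (fidx φ a) = if a.sat G u then 1 else 0 := by
      intro u
      have hx := h u (fidx φ a) (by rw [get_fidx ha]; exact hha)
      rw [get_fidx ha] at hx
      exact hx
    have hagg := agg_eq φ G emb v (fidx φ a) a hcor
    cases k with
    | zero =>
      simp [cpf, csf, b2f, GML.sat]
    | succ k' =>
      simp only [cpf, csf, dpf, dsf, b2f, wpf, wsf]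
      rw [sum_ind, Fin.append_right, hagg]
      set N := Nat.card {u : G.V // G.adj v u ∧ a.sat G u} with hN
      by_cases hk : k' + 1 ≤ N
      · rw [if_pos (show GML.sat G (.dia (k'+1) a) v from hk)]
        have hc : ((k':ℝ) + 1) ≤ (N:ℝ) := by exact_mod_cast hk
        have e1 : max 0 ((N:ℝ) + -(k':ℝ)) = (N:ℝ) + -(k':ℝ) :=
          max_eq_right (by linarith)
        have e2 : max 0 ((N:ℝ) + (-(k':ℝ) - 1)) = (N:ℝ) + (-(k':ℝ) - 1) :=
          max_eq_right (by linarith)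
        rw [e1, e2]
        ring
      · rw [if_neg (show ¬ GML.sat G (.dia (k'+1) a) v from hk)]
        have hc : (N:ℝ) ≤ (k':ℝ) := by
          have : N ≤ k' := by omega
          exact_mod_cast this
        have e1 : max 0 ((N:ℝ) + -(k':ℝ)) = 0 := max_eq_left (by linarith)
        have e2 : max 0 ((N:ℝ) + (-(k':ℝ) - 1)) = 0 := max_eq_left (by linarith)
        rw [e1, e2]
        ring

lemma lay3_sem (φ : GML p) (G : LGraph p) {i : ℕ} {emb : G.V → Fin (M φ) → ℝ}
    (h : Inv φ G i emb) (hhgt : hgt φ ≤ i) (v : G.V) :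
    (lay3 φ).apply G emb v 0 = if φ.sat G v then 1 else 0 := by
  have hx := h v (fidx φ φ) (by rw [get_fidx (self_mem_subList φ)]; exact hhgt)
  rw [get_fidx (self_mem_subList φ)] at hx
  simp only [GNNLayer.apply, lay3, Matrix.mulVec, dotProduct, Matrix.of_apply,
    Pi.add_apply, Pi.zero_apply, add_zero]
  rw [sum_ind, Fin.append_left, hx]

/-- The tail of the GNN: `n` step layers followed by the output layer. -/
noncomputable def stepsGNN (φ : GML p) : ℕ → GNN (M φ) 1
  | 0 => .last (lay3 φ)
  | (n+1) => .cons (lay2 φ) (stepsGNN φ n)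

lemma stepsGNN_sumReLU (φ : GML p) : ∀ n, (stepsGNN φ n).SumReLU
  | 0 => ⟨rfl, IsReLUFFNN.affine _ _⟩
  | (n+1) => ⟨⟨rfl, canon_relu _ _ _ _⟩, stepsGNN_sumReLU φ n⟩

lemma stepsGNN_sem (φ : GML p) (G : LGraph p) :
    ∀ (n i : ℕ), 1 ≤ i → hgt φ ≤ i + n →
      ∀ emb, Inv φ G i emb → ∀ v,
        (stepsGNN φ n).run G emb v 0 = if φ.sat G v then 1 else 0 := by
  intro n
  induction n with
  | zero =>
    intro i hi hh emb hInv v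
    simp only [stepsGNN, GNN.run]
    exact lay3_sem φ G hInv (by omega) v
  | succ n ih =>
    intro i hi hh emb hInv v
    simp only [stepsGNN, GNN.run]
    exact ih (i+1) (by omega) (by omega) _ (inv_step φ G hi hInv) v

end GmlGnn

/-- For every GML formula `φ` there is a GNN `A`, using only Sum
aggregation and ReLU-FFNN combination functions, with `cls_A = cls_φ`. -/
theorem gml_to_gnn (p : ℕ) (φ : GML p) :
    ∃ A : GNN p 1, A.SumReLU ∧
      ∀ (G : LGraph p) (v : G.V), (A.clsP G v ↔ φ.sat G v) := by
  refine ⟨GNN.cons (GmlGnn.lay1 φ) (GmlGnn.stepsGNN φ (GmlGnn.hgt φ)),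
    ⟨⟨rfl, IsReLUFFNN.affine _ _⟩, GmlGnn.stepsGNN_sumReLU φ _⟩, ?_⟩
  intro G v
  have hrun : (GNN.cons (GmlGnn.lay1 φ) (GmlGnn.stepsGNN φ (GmlGnn.hgt φ))).run
      G G.embG v 0 = if φ.sat G v then 1 else 0 := by
    simp only [GNN.run]
    exact GmlGnn.stepsGNN_sem φ G (GmlGnn.hgt φ) 1 le_rfl (by omega) _
      (GmlGnn.inv_one φ G) v
  rw [GNN.clsP, hrun]
  by_cases hs : φ.sat G v <;> simp [hs]
end

section
/- Let A be a (D,D')-GNN with D = |P|, let N > 0, and let X = {run_A(G, emb_G)(v) : G a graph of degree at most N, v a node of G} ⊆ R^{D'} be the set of all node embeddings A can produce on graphs of degree at most N. Then X is finite, and for each x ∈ X there is a GML formula φ_x such that for every pointed graph (G,v) of degree at most N: G,v ⊨ φ_x iff run_A(G,emb_G)(v) = x. In particular, for each GNN classifier cls_A there is a GML formula φ with cls_φ(G,v) = cls_A(G,v) for all pointed graphs (G,v) of degree at most N. -/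
open Classical

/-! ### Auxiliary material for Statement 18 -/

namespace GML
variable {p : ℕ}

def bigAnd : List (GML p) → GML p
  | [] => .top
  | (φ :: L) => .and φ (bigAnd L)

def orf (φ ψ : GML p) : GML p := .not (.and (.not φ) (.not ψ))

def bigOr : List (GML p) → GML p
  | [] => .not .top
  | (φ :: L) => orf φ (bigOr L)

theorem sat_bigAnd (G : LGraph p) (L : List (GML p)) (v : G.V) :
    (bigAnd L).sat G v ↔ ∀ ψ ∈ L, ψ.sat G v := by
  induction L with
  | nil => simp [bigAnd, sat]
  | cons a L ih => simp [bigAnd, sat, ih]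

theorem sat_bigOr (G : LGraph p) (L : List (GML p)) (v : G.V) :
    (bigOr L).sat G v ↔ ∃ ψ ∈ L, ψ.sat G v := by
  induction L with
  | nil => simp [bigOr, sat]
  | cons a L ih =>
    simp only [bigOr, orf, sat, ih, List.mem_cons, not_and, not_not]
    constructor
    · intro h
      by_cases ha : a.sat G v
      · exact ⟨a, Or.inl rfl, ha⟩
      · obtain ⟨ψ, hψ, hs⟩ := h ha
        exact ⟨ψ, Or.inr hψ, hs⟩
    · rintro ⟨ψ, (rfl | hψ), hs⟩ h1
      · exact absurd hs h1
      · exact ⟨ψ, hψ, hs⟩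

def exactly (k : ℕ) (φ : GML p) : GML p := .and (.dia k φ) (.not (.dia (k+1) φ))

theorem sat_exactly (G : LGraph p) (k : ℕ) (φ : GML p) (v : G.V) :
    (exactly k φ).sat G v ↔ Nat.card {u : G.V // G.adj v u ∧ φ.sat G u} = k := by
  simp only [exactly, sat]
  omega

end GML

theorem nat_card_count {p D : ℕ} (G : LGraph p) (v : G.V) (f : G.V → Fin D → ℝ)
    (x : Fin D → ℝ) :
    Nat.card {u : G.V // G.adj v u ∧ f u = x} =
      Multiset.count x ((G.nbrFinset v).val.map f) := by
  classical
  rw [Multiset.count_map, Nat.card_eq_fintype_card, Fintype.card_subtype]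
  show _ = Multiset.card ((G.nbrFinset v).val.filter _)
  rw [LGraph.nbrFinset, Finset.filter_val, Multiset.filter_filter]
  rw [Finset.card, Finset.filter_val]
  apply congrArg
  apply Multiset.filter_congr
  intro u _
  exact ⟨fun ⟨h1, h2⟩ => ⟨h2.symm, h1⟩, fun ⟨h1, h2⟩ => ⟨h2, h1.symm⟩⟩

theorem multiset_eq_sum_count {D : ℕ} (S : Finset (Fin D → ℝ)) (M : Multiset (Fin D → ℝ))
    (h : ∀ a ∈ M, a ∈ S) :
    M = S.attach.sum (fun s => Multiset.replicate (M.count s.1) s.1) := by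
  classical
  rw [Finset.sum_attach S (fun s => Multiset.replicate (M.count s) s)]
  ext a
  rw [Multiset.count_sum']
  by_cases ha : a ∈ S
  · rw [Finset.sum_eq_single a]
    · simp [Multiset.count_replicate]
    · intro b _ hb
      rw [Multiset.count_replicate, if_neg hb]
    · intro h'; exact absurd ha h'
  · rw [Multiset.count_eq_zero.mpr (fun hm => ha (h a hm))]
    refine (Finset.sum_eq_zero ?_).symm
    intro b hb
    have hab : b ≠ a := fun h' => ha (h' ▸ hb)
    rw [Multiset.count_replicate, if_neg hab]

/-- The key invariant: over degree-`≤ N` graphs, the family `F` of node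
embeddings takes finitely many values, each definable by a GML formula. -/
structure GoodFam (p N D : ℕ) (F : (G : LGraph p) → G.V → Fin D → ℝ) : Type where
  S : Finset (Fin D → ℝ)
  φ : (Fin D → ℝ) → GML p
  mem : ∀ G : LGraph p, G.degLe N → ∀ v, F G v ∈ S
  sat : ∀ x ∈ S, ∀ G : LGraph p, G.degLe N → ∀ v : G.V, ((φ x).sat G v ↔ F G v = x)

noncomputable def goodEmb (p N : ℕ) : GoodFam p N p (fun G => G.embG) where
  S := Finset.image (fun s : Finset (Fin p) => fun i => if i ∈ s then (1:ℝ) else 0)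
    Finset.univ
  φ := fun x => GML.bigAnd ((List.finRange p).map
    (fun i => if x i = 1 then GML.prop i else GML.not (GML.prop i)))
  mem := by
    classical
    intro G _ v
    refine Finset.mem_image.mpr ⟨Finset.univ.filter (fun i => G.lab v i),
      Finset.mem_univ _, ?_⟩
    funext i
    simp [LGraph.embG]
  sat := by
    classical
    intro x hx G _ v
    obtain ⟨s, -, rfl⟩ := Finset.mem_image.mp hx
    rw [GML.sat_bigAnd]
    have hx1 : ∀ i : Fin p, ((if i ∈ s then (1:ℝ) else 0) = 1) ↔ i ∈ s := by
      intro i; split_ifs with hc <;> simp [hc]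
    constructor
    · intro h
      funext i
      have hi := h _ (List.mem_map.mpr ⟨i, List.mem_finRange i, rfl⟩)
      show (if G.lab v i then (1:ℝ) else 0) = _
      by_cases hm : i ∈ s
      · rw [if_pos ((hx1 i).mpr hm)] at hi
        simp only [GML.sat] at hi
        simp [hi, hm]
      · rw [if_neg (fun h1 => hm ((hx1 i).mp h1))] at hi
        simp only [GML.sat] at hi
        simp [hi, hm]
    · intro he ψ hψ
      obtain ⟨i, -, rfl⟩ := List.mem_map.mp hψ
      have hfi : (if G.lab v i then (1:ℝ) else 0) = (if i ∈ s then 1 else 0) :=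
        congrFun he i
      by_cases hm : i ∈ s
      · rw [if_pos ((hx1 i).mpr hm)]
        show G.lab v i
        by_contra hl
        rw [if_neg hl, if_pos hm] at hfi
        exact zero_ne_one hfi
      · rw [if_neg (fun h1 => hm ((hx1 i).mp h1))]
        show ¬ G.lab v i
        intro hl
        rw [if_pos hl, if_neg hm] at hfi
        exact one_ne_zero hfi

/-- The multiset of `f`-images of the neighbours of `v`. -/
noncomputable def nbrMS {p D : ℕ} (G : LGraph p) (f : G.V → Fin D → ℝ) (v : G.V) :
    Multiset (Fin D → ℝ) := (G.nbrFinset v).val.map f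

/-- The multiset over `S` with count function `c`. -/
noncomputable def msOf {D N : ℕ} (S : Finset (Fin D → ℝ)) (c : ↥S → Fin (N+1)) :
    Multiset (Fin D → ℝ) := S.attach.sum (fun s => Multiset.replicate (c s : ℕ) s.1)

/-- The output value of layer `l` on input value `q.1` with neighbour count
function `q.2`. -/
noncomputable def outOf {D D' N : ℕ} (l : GNNLayer D D') (S : Finset (Fin D → ℝ))
    (q : (Fin D → ℝ) × (↥S → Fin (N+1))) : Fin D' → ℝ :=
  l.com (Fin.append q.1 (l.agg (msOf S q.2)))

noncomputable def cntOf {p D N : ℕ} (S : Finset (Fin D → ℝ)) {G : LGraph p}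
    (f : G.V → Fin D → ℝ) (v : G.V)
    (hle : ∀ x, (nbrMS G f v).count x ≤ N) : ↥S → Fin (N+1) :=
  fun s => ⟨(nbrMS G f v).count s.1, Nat.lt_succ_of_le (hle s.1)⟩

theorem nbrMS_eq_msOf {p D N : ℕ} (S : Finset (Fin D → ℝ)) {G : LGraph p}
    (f : G.V → Fin D → ℝ) (v : G.V) (hle : ∀ x, (nbrMS G f v).count x ≤ N)
    (hmem : ∀ a ∈ nbrMS G f v, a ∈ S) :
    nbrMS G f v = msOf S (cntOf S f v hle) :=
  multiset_eq_sum_count S (nbrMS G f v) hmem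

theorem nbr_card_le {p N : ℕ} (G : LGraph p) (hG : G.degLe N) (v : G.V) :
    (G.nbrFinset v).card ≤ N := by
  classical
  have := hG v
  rwa [Nat.card_eq_fintype_card, Fintype.card_subtype] at this

noncomputable def goodStep {p N D D' : ℕ} (l : GNNLayer D D')
    {F : (G : LGraph p) → G.V → Fin D → ℝ} (h : GoodFam p N D F) :
    GoodFam p N D' (fun G v => l.apply G (F G) v) := by
  classical
  have hcount : ∀ (G : LGraph p), G.degLe N → ∀ (v : G.V) (x : Fin D → ℝ),
      (nbrMS G (F G) v).count x ≤ N := by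
    intro G hG v x
    calc (nbrMS G (F G) v).count x ≤ Multiset.card (nbrMS G (F G) v) :=
          Multiset.count_le_card _ _
      _ = (G.nbrFinset v).card := by rw [nbrMS, Multiset.card_map]; rfl
      _ ≤ N := nbr_card_le G hG v
  have hdecomp : ∀ (G : LGraph p) (hG : G.degLe N) (v : G.V),
      nbrMS G (F G) v = msOf h.S (cntOf h.S (F G) v (hcount G hG v)) := by
    intro G hG v
    exact nbrMS_eq_msOf h.S (F G) v (hcount G hG v) (fun a ha => by
      obtain ⟨u, -, rfl⟩ := Multiset.mem_map.mp ha
      exact h.mem G hG u)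
  have happly : ∀ (G : LGraph p) (hG : G.degLe N) (v : G.V),
      l.apply G (F G) v = outOf l h.S (F G v, cntOf h.S (F G) v (hcount G hG v)) := by
    intro G hG v
    show l.com (Fin.append (F G v) (l.agg ((G.nbrFinset v).val.map (F G)))) = _
    rw [outOf]
    rw [show ((G.nbrFinset v).val.map (F G)) = nbrMS G (F G) v from rfl,
      hdecomp G hG v]
  have hB : ∀ (G : LGraph p) (hG : G.degLe N) (v : G.V) (s : Fin D → ℝ),
      s ∈ h.S → Nat.card {u : G.V // G.adj v u ∧ (h.φ s).sat G u} =
        (nbrMS G (F G) v).count s := by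
    intro G hG v s hs
    unfold nbrMS
    rw [← nat_card_count G v (F G) s]
    exact Nat.card_congr (Equiv.subtypeEquivRight
      (fun u => and_congr_right (fun _ => h.sat s hs G hG u)))
  refine
  { S := Finset.image (outOf l h.S)
      ((h.S ×ˢ (Finset.univ : Finset (↥h.S → Fin (N+1)))))
    φ := fun y => GML.bigOr ((((h.S ×ˢ (Finset.univ : Finset (↥h.S → Fin (N+1)))).filter
        (fun q => outOf l h.S q = y)).toList).map
      (fun q => GML.and (h.φ q.1)
        (GML.bigAnd (h.S.attach.toList.map
          (fun s => GML.exactly (q.2 s : ℕ) (h.φ s.1))))))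
    mem := ?_
    sat := ?_ }
  · intro G hG v
    exact Finset.mem_image.mpr ⟨(F G v, cntOf h.S (F G) v (hcount G hG v)),
      Finset.mem_product.mpr ⟨h.mem G hG v, Finset.mem_univ _⟩, (happly G hG v).symm⟩
  · intro y hy G hG v
    rw [GML.sat_bigOr]
    constructor
    · rintro ⟨ψ, hψ, hs⟩
      obtain ⟨q, hq, rfl⟩ := List.mem_map.mp hψ
      rw [Finset.mem_toList, Finset.mem_filter] at hq
      obtain ⟨hqmem, hqy⟩ := hq
      obtain ⟨hq1, -⟩ := Finset.mem_product.mp hqmem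
      obtain ⟨hs1, hs2⟩ := (by exact hs : (h.φ q.1).sat G v ∧ _)
      have hF : F G v = q.1 := (h.sat q.1 hq1 G hG v).mp hs1
      rw [GML.sat_bigAnd] at hs2
      have hc : cntOf h.S (F G) v (hcount G hG v) = q.2 := by
        funext s
        have := hs2 _ (List.mem_map.mpr ⟨s, Finset.mem_toList.mpr (Finset.mem_attach _ s), rfl⟩)
        rw [GML.sat_exactly] at this
        rw [hB G hG v s.1 s.2] at this
        exact Fin.ext this
      rw [happly G hG v, hF, hc, hqy]
    · intro heq
      refine ⟨_, List.mem_map.mpr ⟨(F G v, cntOf h.S (F G) v (hcount G hG v)), ?_, rfl⟩, ?_⟩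
      · rw [Finset.mem_toList, Finset.mem_filter]
        exact ⟨Finset.mem_product.mpr ⟨h.mem G hG v, Finset.mem_univ _⟩,
          (happly G hG v).symm.trans heq⟩
      · refine ⟨(h.sat _ (h.mem G hG v) G hG v).mpr rfl, ?_⟩
        rw [GML.sat_bigAnd]
        intro ψ hψ
        obtain ⟨s, -, rfl⟩ := List.mem_map.mp hψ
        rw [GML.sat_exactly]
        exact hB G hG v s.1 s.2

noncomputable def goodRun {p N : ℕ} : {D D' : ℕ} → (A : GNN D D') →
    (F : (G : LGraph p) → G.V → Fin D → ℝ) → GoodFam p N D F →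
    GoodFam p N D' (fun G v => A.run G (F G) v)
  | _, _, .last l, _, h => goodStep l h
  | _, _, .cons l rest, F, h => goodRun rest (fun G => l.apply G (F G)) (goodStep l h)

/-- Over graphs of degree at most `N`, a GNN produces only
finitely many node embeddings, each definable by a GML formula; in particular
every GNN node classifier is equivalent, over degree-`≤ N` graphs, to a GML
formula. -/
theorem gnn_to_gml (p D' : ℕ) (A : GNN p D') (N : ℕ) (hN : 0 < N) :
    ({x : Fin D' → ℝ | ∃ G : LGraph p, G.degLe N ∧ ∃ v : G.V, A.run G G.embG v = x}).Finite ∧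
    (∀ x : Fin D' → ℝ,
      (∃ G : LGraph p, G.degLe N ∧ ∃ v : G.V, A.run G G.embG v = x) →
      ∃ φ : GML p, ∀ (G : LGraph p), G.degLe N → ∀ v : G.V,
        (φ.sat G v ↔ A.run G G.embG v = x)) ∧
    (∀ B : GNN p 1, ∃ φ : GML p, ∀ (G : LGraph p), G.degLe N → ∀ v : G.V,
      (φ.sat G v ↔ B.clsP G v)) := by
  classical
  obtain ⟨S, φf, hmem, hsat⟩ := goodRun (p := p) (N := N) A (fun G => G.embG) (goodEmb p N)
  refine ⟨?_, ?_, ?_⟩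
  · apply Set.Finite.subset S.finite_toSet
    rintro x ⟨G, hG, v, rfl⟩
    exact hmem G hG v
  · rintro x ⟨G, hG, v, rfl⟩
    exact ⟨φf _, fun G' hG' v' => hsat _ (hmem G hG v) G' hG' v'⟩
  · intro B
    obtain ⟨S, φf, hmem, hsat⟩ := goodRun (p := p) (N := N) B (fun G => G.embG) (goodEmb p N)
    refine ⟨GML.bigOr (((S.filter (fun x => 0 < x 0)).toList).map φf), ?_⟩
    intro G hG v
    rw [GML.sat_bigOr]
    constructor
    · rintro ⟨ψ, hψ, hs⟩
      obtain ⟨x, hx, rfl⟩ := List.mem_map.mp hψ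
      rw [Finset.mem_toList, Finset.mem_filter] at hx
      have hrun := (hsat x hx.1 G hG v).mp hs
      show 0 < B.run G G.embG v 0
      rw [show B.run G G.embG v = x from hrun]
      exact hx.2
    · intro hcls
      refine ⟨φf (B.run G G.embG v), List.mem_map.mpr ⟨_, ?_, rfl⟩,
        (hsat _ (hmem G hG v) G hG v).mpr rfl⟩
      rw [Finset.mem_toList, Finset.mem_filter]
      exact ⟨hmem G hG v, hcls⟩
end
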